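/- If μ is a nonzero complex number with μ² + μ⁻² = 2 − ω, μ + μ⁻¹ ≠ 0, and |μ| ≠ 1, then there exists N ∈ ℕ such that for all m, n ≥ N, τ_m = τ_n implies m = n; in particular the values τ_n are pairwise distinct for sufficiently large n. -/

import Mathlib

open Matrix

/-- The matrix `X = [[1,1],[0,1]]`. -/
noncomputable def Xmat : Matrix (Fin 2) (Fin 2) ℂ := !![1, 1; 0, 1]

/-- The matrix `Y = [[1,0],[ω,1]]`. -/
noncomputable def Ymat (ω : ℂ) : Matrix (Fin 2) (Fin 2) ℂ := !![1, 0; ω, 1]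

/-- `τ n` is the trace of `X ⬝ (Y ⬝ X⁻¹)^n`. -/
noncomputable def τ (ω : ℂ) (n : ℕ) : ℂ := (Xmat * (Ymat ω * Xmat⁻¹) ^ n).trace

lemma Xinv : Xmat⁻¹ = !![1, -1; 0, 1] := by
  apply Matrix.inv_eq_right_inv
  simp [Xmat, Matrix.mul_fin_two, Matrix.one_fin_two]

lemma hA (ω : ℂ) : Ymat ω * Xmat⁻¹ = !![1, -1; ω, 1 - ω] := by
  rw [Xinv]; simp [Ymat, Matrix.mul_fin_two]; ring

lemma hA2 (ω : ℂ) : (!![1, -1; ω, 1 - ω] : Matrix (Fin 2) (Fin 2) ℂ) ^ 2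
    = (2 - ω) • !![1, -1; ω, 1 - ω] - 1 := by
  rw [pow_two]
  ext i j
  fin_cases i <;> fin_cases j <;>
    simp [Matrix.mul_fin_two, Matrix.one_fin_two] <;> ring

lemma tau_zero (ω : ℂ) : τ ω 0 = 2 := by
  simp [τ, Xmat, Matrix.trace_fin_two]; norm_num

lemma tau_one (ω : ℂ) : τ ω 1 = 2 := by
  simp only [τ, pow_one, hA]
  unfold Xmat
  rw [Matrix.mul_fin_two, Matrix.trace_fin_two]
  simp
  ring

lemma tau_rec (ω : ℂ) (n : ℕ) : τ ω (n + 2) = (2 - ω) * τ ω (n + 1) - τ ω n := by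
  simp only [τ, hA]
  have key : (!![1, -1; ω, 1 - ω] : Matrix (Fin 2) (Fin 2) ℂ) ^ (n + 2)
      = (2 - ω) • !![1, -1; ω, 1 - ω] ^ (n + 1) - !![1, -1; ω, 1 - ω] ^ n := by
    calc (!![1, -1; ω, 1 - ω] : Matrix (Fin 2) (Fin 2) ℂ) ^ (n + 2)
        = !![1, -1; ω, 1 - ω] ^ n * !![1, -1; ω, 1 - ω] ^ 2 := by rw [← pow_add]
      _ = _ := by
          rw [hA2, Matrix.mul_sub, Matrix.mul_smul, Matrix.mul_one, ← pow_succ]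
  rw [key, Matrix.mul_sub, Matrix.mul_smul, Matrix.trace_sub, Matrix.trace_smul]
  simp [smul_eq_mul]

/-- The closed-form expression `2(μ^(2n-1) + μ^(1-2n))/(μ + μ⁻¹)` written with
natural-number powers. -/
noncomputable def fcl (μ : ℂ) (n : ℕ) : ℂ :=
  2 * (μ⁻¹ * μ ^ (2 * n) + μ * μ⁻¹ ^ (2 * n)) / (μ + μ⁻¹)

lemma tau_closed (ω μ : ℂ) (hμ : μ ≠ 0) (hchar : μ ^ 2 + μ⁻¹ ^ 2 = 2 - ω)
    (hden : μ + μ⁻¹ ≠ 0) (n : ℕ) : τ ω n = fcl μ n := by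
  have hν : μ * μ⁻¹ = 1 := mul_inv_cancel₀ hμ
  unfold fcl
  induction n using Nat.twoStepInduction with
  | zero => rw [tau_zero, eq_comm, div_eq_iff hden]; ring
  | one => rw [tau_one, eq_comm, div_eq_iff hden]; linear_combination (2*(μ+μ⁻¹))*hν
  | more n ih1 ih2 =>
      rw [tau_rec, ih2, ih1, ← hchar]
      linear_combination (2*(μ⁻¹*μ^(2*n)+μ*μ⁻¹^(2*n))*(μ*μ⁻¹+1)/(μ+μ⁻¹)) * hν

lemma fcl_inv (μ : ℂ) (n : ℕ) : fcl μ⁻¹ n = fcl μ n := by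
  unfold fcl
  rw [inv_inv]
  ring_nf

lemma fcl_strict (μ : ℂ) (hμ : μ ≠ 0) (hr : 1 < ‖μ‖) :
    ∃ N : ℕ, ∀ m n : ℕ, N ≤ m → m < n → fcl μ m ≠ fcl μ n := by
  set r := ‖μ‖ with hrdef
  have hr0 : 0 < r := lt_trans one_pos hr
  have hr2 : 0 < r ^ 2 - 1 := by nlinarith
  obtain ⟨N, hN⟩ := pow_unbounded_of_one_lt (2 * r ^ 2 / (r ^ 2 - 1)) hr
  refine ⟨N, fun m n hm hmn heq => ?_⟩
  have key : μ⁻¹ * (μ ^ (2 * n) - μ ^ (2 * m)) = μ * (μ⁻¹ ^ (2 * m) - μ⁻¹ ^ (2 * n)) := by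
    unfold fcl at heq
    rcases eq_or_ne (μ + μ⁻¹) 0 with h0 | h0
    · exfalso
      have hsq : μ ^ 2 = -1 := by
        have h1 := mul_eq_zero_of_left h0 μ
        field_simp at h1
        linear_combination h1
      have : r ^ 2 = 1 := by
        have h1 := congrArg norm hsq
        rw [norm_pow] at h1
        simpa using h1
      nlinarith
    · rw [div_eq_div_iff h0 h0] at heq
      have h2' := mul_right_cancel₀ h0 heq
      linear_combination -h2' / 2
  have habs := congrArg norm key
  have e1 : r⁻¹ * (r ^ (2 * n) - r ^ (2 * m))
      ≤ ‖μ⁻¹ * (μ ^ (2 * n) - μ ^ (2 * m))‖ := by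
    rw [norm_mul, norm_inv]
    have t := norm_sub_norm_le (μ ^ (2 * n)) (μ ^ (2 * m))
    rw [norm_pow, norm_pow] at t
    exact mul_le_mul_of_nonneg_left t (inv_nonneg.mpr hr0.le)
  have e2 : ‖μ * (μ⁻¹ ^ (2 * m) - μ⁻¹ ^ (2 * n))‖ ≤ r * 2 := by
    rw [norm_mul]
    have t := norm_sub_le (μ⁻¹ ^ (2 * m)) (μ⁻¹ ^ (2 * n))
    rw [norm_pow, norm_pow, norm_inv] at t
    have hb : ∀ k : ℕ, r⁻¹ ^ k ≤ 1 := fun k =>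
      pow_le_one₀ (inv_nonneg.mpr hr0.le) (inv_le_one_of_one_le₀ hr.le)
    have := hb (2 * m); have := hb (2 * n)
    nlinarith
  have big : r * 2 < r⁻¹ * (r ^ (2 * n) - r ^ (2 * m)) := by
    have p1 : r ^ N ≤ r ^ (2 * m) := pow_le_pow_right₀ hr.le (by omega)
    have p2 : r ^ (2 * m) * r ^ 2 ≤ r ^ (2 * n) := by
      rw [← pow_add]; exact pow_le_pow_right₀ hr.le (by omega)
    have hNbig : 2 * r ^ 2 < r ^ N * (r ^ 2 - 1) := by
      rw [div_lt_iff₀ hr2] at hN; linarith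
    have h3 : 2 * r ^ 2 < r ^ (2 * n) - r ^ (2 * m) := by
      nlinarith [mul_le_mul_of_nonneg_right p1 hr2.le]
    have hinv : r * r⁻¹ = 1 := mul_inv_cancel₀ hr0.ne'
    have hi0 : 0 < r⁻¹ := inv_pos.mpr hr0
    nlinarith
  linarith [e1.trans_eq habs, e2]

theorem tau_eventually_injective (ω μ : ℂ) (hμ : μ ≠ 0)
    (hchar : μ ^ 2 + μ⁻¹ ^ 2 = 2 - ω) (hden : μ + μ⁻¹ ≠ 0)
    (habs : ‖μ‖ ≠ 1) :
    ∃ N : ℕ, ∀ m n : ℕ, N ≤ m → N ≤ n → τ ω m = τ ω n → m = n := by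
  have hclosed : ∀ n, τ ω n = fcl μ n := tau_closed ω μ hμ hchar hden
  have habs0 : 0 < ‖μ‖ := by
    simpa [norm_pos_iff] using hμ
  have hstrict : ∃ N : ℕ, ∀ m n : ℕ, N ≤ m → m < n → fcl μ m ≠ fcl μ n := by
    rcases lt_or_gt_of_ne habs with h | h
    · have h1 : 1 < ‖μ⁻¹‖ := by
        rw [norm_inv]
        exact one_lt_inv₀ habs0 |>.mpr h
      obtain ⟨N, hN⟩ := fcl_strict μ⁻¹ (inv_ne_zero hμ) h1
      exact ⟨N, fun m n hm hmn => by
        have := hN m n hm hmn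
        rwa [fcl_inv, fcl_inv] at this⟩
    · exact fcl_strict μ hμ h
  obtain ⟨N, hN⟩ := hstrict
  refine ⟨N, fun m n hm hn heq => ?_⟩
  rw [hclosed, hclosed] at heq
  rcases lt_trichotomy m n with h | h | h
  · exact absurd heq (hN m n hm h)
  · exact h
  · exact absurd heq.symm (hN n m hn h)
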